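/- arXiv:1010.2243 — 2 statements merged into one kernel-verified Lean document; each statement's English description precedes it below -/
import Mathlib

section
/- Let H be a Hilbert space, E a closed subspace with orthogonal projection P, and T : H → H a linear map such that for every x ∈ H, T x lies in E ⊕ ℝ·(x − P x) (i.e., T x − P(T x) is a scalar multiple of x − P x). Assume E^⊥ has dimension at least 2. Then there exists a unique λ ∈ ℝ such that T = P ∘ T + λ·I − λ·P. -/
/-- If `T` is linear, `P` is the orthogonal projection onto a closed subspace `E`,
`T x − P (T x)` is always a scalar multiple of `x − P x`, and `dim Eᗮ ≥ 2`, then there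
is a unique `λ ∈ ℝ` with `T = P ∘ T + λ·I − λ·P`. -/
theorem stmt_3 {H : Type*} [NormedAddCommGroup H] [InnerProductSpace ℝ H] [CompleteSpace H]
    (E : Submodule ℝ H) [E.HasOrthogonalProjection] (T : H →ₗ[ℝ] H)
    (hT : ∀ x : H, ∃ mu : ℝ,
      T x = (E.orthogonalProjectionOnto (T x) : H) + mu • (x - (E.orthogonalProjectionOnto x : H)))
    (hdim : 2 ≤ Module.rank ℝ Eᗮ) :
    ∃! lam : ℝ, ∀ x : H, T x = (E.orthogonalProjectionOnto (T x) : H) + lam • x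
        - lam • (E.orthogonalProjectionOnto x : H) := by
  -- Eᗮ is nontrivial
  have hnt : Nontrivial Eᗮ := by
    by_contra h
    have : Subsingleton Eᗮ := not_nontrivial_iff_subsingleton.mp h
    rw [(rank_zero_iff (R := ℝ) (M := Eᗮ)).mpr this] at hdim
    exact absurd hdim (by norm_num)
  obtain ⟨e, he⟩ := exists_ne (0 : Eᗮ)
  have heH : (e : H) ≠ 0 := fun h => he (Subtype.ext h)
  -- Q x = T x - P (T x) as a linear map
  set Pl : H →ₗ[ℝ] H := E.subtype ∘ₗ (E.orthogonalProjectionOnto : H →L[ℝ] E).toLinearMap with hPl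
  have hPlx : ∀ x : H, Pl x = (E.orthogonalProjectionOnto x : H) := fun x => rfl
  set Q : H →ₗ[ℝ] H := T - Pl ∘ₗ T with hQ
  have hQx : ∀ x : H, Q x = T x - (E.orthogonalProjectionOnto (T x) : H) := fun x => rfl
  have hPx : ∀ y : H, y ∈ Eᗮ → (E.orthogonalProjectionOnto y : H) = 0 := fun y hy => by
    rw [Submodule.orthogonalProjectionOnto_apply_of_mem_orthogonal hy]
    simp
  -- for x ∈ Eᗮ, Q x = mu • x for some mu
  have hmem : ∀ x : H, x ∈ Eᗮ → ∃ mu : ℝ, Q x = mu • x := by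
    intro x hx
    obtain ⟨mu, hmu⟩ := hT x
    refine ⟨mu, ?_⟩
    rw [hPx x hx, sub_zero] at hmu
    rw [hQx, sub_eq_iff_eq_add]
    nth_rewrite 1 [hmu]
    abel
  obtain ⟨lam, hlam⟩ := hmem (e : H) e.2
  -- Q x = lam • x for all x ∈ Eᗮ
  have key : ∀ x : H, x ∈ Eᗮ → Q x = lam • x := by
    intro x hx
    by_cases hdep : ∃ t : ℝ, x = t • (e : H)
    · obtain ⟨t, rfl⟩ := hdep
      rw [map_smul, hlam, smul_smul, smul_smul, mul_comm]
    · have hx0 : x ≠ 0 := fun h => hdep ⟨0, by simp [h]⟩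
      obtain ⟨a, ha⟩ := hmem x hx
      obtain ⟨b, hb⟩ := hmem (x + (e : H)) (Eᗮ.add_mem hx e.2)
      rw [map_add, ha, hlam, smul_add] at hb
      -- (a - b) • x = (b - lam) • e
      have heq : (a - b) • x = (b - lam) • (e : H) := by
        have := sub_eq_zero_of_eq hb
        rw [sub_smul, sub_smul]
        linear_combination (norm := module) this
      have hab : a = b := by
        by_contra hne
        apply hdep
        refine ⟨(b - lam) / (a - b), ?_⟩
        rw [div_eq_mul_inv, mul_comm, mul_smul, ← heq, smul_smul,
          inv_mul_cancel₀ (sub_ne_zero.mpr hne), one_smul]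
      have : (b - lam) • (e : H) = 0 := by rw [← heq, hab, sub_self, zero_smul]
      have hbl : b = lam := by
        rcases smul_eq_zero.mp this with h | h
        · linarith [sub_eq_zero.mp h]
        · exact absurd h heH
      rw [ha, hab, hbl]
  -- Q vanishes on E
  have hQE : ∀ x : H, x ∈ E → Q x = 0 := by
    intro x hx
    obtain ⟨mu, hmu⟩ := hT x
    rw [hQx, hmu]
    have : (E.orthogonalProjectionOnto x : H) = x := by
      exact Submodule.starProjection_eq_self_iff.mpr hx
    rw [this]
    simp [Submodule.starProjection_eq_self_iff.mpr (E.starProjection_apply_mem (T x))]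
  refine ⟨lam, ?_, ?_⟩
  · intro x
    have hsplit : Q x = Q ((E.orthogonalProjectionOnto x : H)) + Q (x - (E.orthogonalProjectionOnto x : H)) := by
      rw [← map_add]; congr 1; abel
    have h1 : Q ((E.orthogonalProjectionOnto x : H)) = 0 :=
      hQE _ (E.orthogonalProjectionOnto x).2
    have h2 : Q (x - (E.orthogonalProjectionOnto x : H)) =
        lam • (x - (E.orthogonalProjectionOnto x : H)) :=
      key _ (Submodule.sub_starProjection_mem_orthogonal x)
    have := hsplit
    rw [h1, h2, zero_add, hQx] at this
    rw [smul_sub] at this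
    linear_combination (norm := module) this
  · intro c hc
    have h1 := hc (e : H)
    rw [hPx _ e.2, smul_zero, sub_zero] at h1
    have h2 : T e = (E.orthogonalProjectionOnto (T e) : H) + lam • (e : H) := by
      have := key (e : H) e.2
      rw [hQx] at this
      linear_combination (norm := module) this
    have : (c - lam) • (e : H) = 0 := by
      rw [sub_smul]
      have := h1.symm.trans h2
      linear_combination (norm := module) this
    rcases smul_eq_zero.mp this with h | h
    · linarith [sub_eq_zero.mp h]
    · exact absurd h heH
end

section
/- Let H be a separable infinite-dimensional complex Hilbert space and T = λ·I + K with λ ∈ ℂ and K compact. Then there exists a closed subspace E of H with E ≠ {0} and E ≠ H such that T(E) ⊆ E. -/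
open ContinuousLinearMap Metric Set Filter Topology ENNReal NNReal Submodule

section Aux

variable {E : Type*} [NormedAddCommGroup E] [NormedSpace ℂ E] [CompleteSpace E]

variable [Nontrivial E]

lemma near_unit {a : E →L[ℂ] E} {z w : ℂ} {u : (E →L[ℂ] E)ˣ}
    (hu : (u : E →L[ℂ] E) = algebraMap ℂ _ z - a)
    (h : ‖w - z‖ < ‖((u⁻¹ : (E →L[ℂ] E)ˣ) : E →L[ℂ] E)‖⁻¹) :
    IsUnit (algebraMap ℂ (E →L[ℂ] E) w - a) := by
  have : algebraMap ℂ (E →L[ℂ] E) w - a - u = algebraMap ℂ _ (w - z) := by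
    rw [hu, map_sub]; abel
  exact (Units.ofNearby u _ (by rw [this, norm_algebraMap']; exact h)).isUnit

/-- A compact operator with positive spectral radius has an eigenvector with nonzero
eigenvalue. -/
lemma eigen_of_spectralRadius_ne_zero (K : E →L[ℂ] E) (hK : IsCompactOperator K)
    (hr : spectralRadius ℂ K ≠ 0) :
    ∃ (μ : ℂ) (v : E), μ ≠ 0 ∧ v ≠ 0 ∧ K v = μ • v := by
  obtain ⟨μ, hμmem, hμr⟩ := spectrum.exists_nnnorm_eq_spectralRadius (A := E →L[ℂ] E) K
  have hμ : μ ≠ 0 := by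
    rintro rfl; apply hr; rw [← hμr]; simp
  -- for each n, (1 + 1/(n+1)) • μ is in the resolvent set
  have hres : ∀ n : ℕ, IsUnit (algebraMap ℂ (E →L[ℂ] E) ((1 + (n+1 : ℂ)⁻¹) * μ) - K) := by
    intro n
    have : spectralRadius ℂ K < ‖(1 + (n+1:ℂ)⁻¹) * μ‖₊ := by
      rw [← hμr]
      have h1 : (1:ℝ) < ‖(1 + (n+1:ℂ)⁻¹)‖ := by
        have : (1 + (n+1:ℂ)⁻¹) = ((1 + (n+1:ℝ)⁻¹ : ℝ) : ℂ) := by push_cast; ring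
        rw [this, Complex.norm_real, Real.norm_of_nonneg (by positivity)]
        simp only [lt_add_iff_pos_right]
        positivity
      have h2 : ‖μ‖₊ < ‖(1 + (n+1:ℂ)⁻¹) * μ‖₊ := by
        rw [nnnorm_mul]
        have hμn : (0:ℝ) < ‖μ‖ := by simpa using hμ
        calc ‖μ‖₊ = 1 * ‖μ‖₊ := (one_mul _).symm
        _ < ‖(1 + (n+1:ℂ)⁻¹)‖₊ * ‖μ‖₊ := by
              apply mul_lt_mul_of_pos_right _ (by simpa using hμn)
              exact_mod_cast h1
      exact_mod_cast ENNReal.coe_lt_coe.mpr h2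
    have := spectrum.mem_resolventSet_of_spectralRadius_lt this
    rwa [resolventSet, Set.mem_setOf_eq] at this
  set t : ℕ → ℂ := fun n => 1 + (n+1 : ℂ)⁻¹ with ht
  have hres' : ∀ n : ℕ, IsUnit (algebraMap ℂ (E →L[ℂ] E) (t n * μ) - K) := hres
  clear hres
  set u : ℕ → (E →L[ℂ] E)ˣ := fun n => (hres' n).unit with hu
  set R : ℕ → (E →L[ℂ] E) := fun n => ((u n)⁻¹ : (E →L[ℂ] E)ˣ) with hR
  have hnc : ∀ n : ℕ, ‖(n+1:ℂ)⁻¹‖ = ((n:ℝ)+1)⁻¹ := by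
    intro n
    rw [norm_inv, show ((n:ℂ)+1) = ((n+1:ℕ):ℂ) by push_cast; ring, Complex.norm_natCast]
    push_cast; ring
  -- resolvent norm lower bound
  have hRlb : ∀ n : ℕ, ‖R n‖⁻¹ ≤ ((n:ℝ)+1)⁻¹ * ‖μ‖ := by
    intro n
    by_contra hcon
    push_neg at hcon
    have : IsUnit (algebraMap ℂ (E →L[ℂ] E) μ - K) := by
      refine near_unit ((hres' n).unit_spec) ?_
      have heq : ‖μ - t n * μ‖ = ((n:ℝ)+1)⁻¹ * ‖μ‖ := by
        have : μ - t n * μ = -((n+1:ℂ)⁻¹ * μ) := by rw [ht]; ring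
        rw [this, norm_neg, norm_mul, hnc]
      rw [heq]
      exact hcon
    exact spectrum.mem_iff.mp hμmem this
  have hRpos : ∀ n : ℕ, 0 < ‖R n‖ := by
    intro n
    rw [norm_pos_iff]
    exact Units.ne_zero ((u n)⁻¹)
  -- choose approximate eigenvectors
  have hwex : ∀ n : ℕ, ∃ x : E, ‖x‖ < 1 ∧ ‖R n‖ / 2 < ‖R n x‖ := fun n =>
    (R n).exists_lt_apply_of_lt_opNorm (half_lt_self (hRpos n))
  choose w hw1 hw2 using hwex
  have hRw : ∀ n, 0 < ‖R n (w n)‖ := fun n => lt_of_le_of_lt (by positivity) (hw2 n)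
  set c : ℕ → ℂ := fun n => ((‖R n (w n)‖ : ℂ))⁻¹ with hcdef
  have hcnorm : ∀ n, ‖c n‖ = ‖R n (w n)‖⁻¹ := by
    intro n
    rw [hcdef]
    rw [norm_inv, Complex.norm_real, Real.norm_of_nonneg (norm_nonneg _)]
  set v : ℕ → E := fun n => c n • (R n (w n)) with hv
  have hvnorm : ∀ n, ‖v n‖ = 1 := by
    intro n
    rw [hv]
    simp only [norm_smul, hcnorm]
    exact inv_mul_cancel₀ (hRw n).ne'
  have halg : ∀ (ξ : ℂ) (x : E), (algebraMap ℂ (E →L[ℂ] E) ξ) x = ξ • x := by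
    intro ξ x
    rw [Algebra.algebraMap_eq_smul_one]; rfl
  -- K (v n) is close to μ • v n
  have hKv : ∀ n, K (v n) = (t n * μ) • v n - c n • w n := by
    intro n
    have h1 : (algebraMap ℂ (E →L[ℂ] E) (t n * μ) - K) (R n (w n)) = w n := by
      have he : (algebraMap ℂ (E →L[ℂ] E) (t n * μ) - K) * R n = 1 := by
        rw [← (hres' n).unit_spec, hR]
        exact (u n).mul_inv
      have := congrArg (fun (f : E →L[ℂ] E) => f (w n)) he
      simpa [mul_apply] using this
    rw [sub_apply, halg] at h1
    have h2 : K (R n (w n)) = (t n * μ) • R n (w n) - w n := by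
      rw [eq_sub_iff_add_eq, add_comm]
      exact (sub_eq_iff_eq_add.mp h1).symm
    rw [hv]
    simp only [map_smul, h2, smul_sub, smul_comm (c n) (t n * μ)]
  have hd : ∀ n, ‖K (v n) - μ • v n‖ ≤ 3 * ‖μ‖ / ((n:ℝ)+1) := by
    intro n
    have hsplit : K (v n) - μ • v n = ((n+1:ℂ)⁻¹ * μ) • v n - c n • w n := by
      rw [hKv n]
      have : t n * μ - μ = (n+1:ℂ)⁻¹ * μ := by rw [ht]; ring
      rw [← this]
      rw [sub_smul]
      abel
    rw [hsplit]
    have hb1 : ‖((n+1:ℂ)⁻¹ * μ) • v n‖ ≤ ‖μ‖ / ((n:ℝ)+1) := by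
      rw [norm_smul, hvnorm, mul_one, norm_mul, hnc]
      rw [div_eq_inv_mul]
    have hb2 : ‖c n • w n‖ ≤ 2 * ‖μ‖ / ((n:ℝ)+1) := by
      rw [norm_smul, hcnorm]
      have h1 : ‖R n (w n)‖⁻¹ ≤ 2 * ((n:ℝ)+1)⁻¹ * ‖μ‖ := by
        have h2 : ‖R n (w n)‖⁻¹ ≤ (‖R n‖/2)⁻¹ :=
          inv_anti₀ (by linarith [hRpos n]) (hw2 n).le
        have h3 : (‖R n‖/2)⁻¹ = 2 * ‖R n‖⁻¹ := by rw [inv_div]; ring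
        calc ‖R n (w n)‖⁻¹ ≤ 2 * ‖R n‖⁻¹ := by rw [← h3]; exact h2
          _ ≤ 2 * (((n:ℝ)+1)⁻¹ * ‖μ‖) := by nlinarith [hRlb n]
          _ = 2 * ((n:ℝ)+1)⁻¹ * ‖μ‖ := by ring
      calc ‖R n (w n)‖⁻¹ * ‖w n‖ ≤ (2 * ((n:ℝ)+1)⁻¹ * ‖μ‖) * 1 := by
            apply mul_le_mul h1 (hw1 n).le (norm_nonneg _) (by positivity)
        _ = 2 * ‖μ‖ / ((n:ℝ)+1) := by ring
    calc ‖((n+1:ℂ)⁻¹ * μ) • v n - c n • w n‖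
        ≤ ‖((n+1:ℂ)⁻¹ * μ) • v n‖ + ‖c n • w n‖ := norm_sub_le _ _
      _ ≤ ‖μ‖ / ((n:ℝ)+1) + 2 * ‖μ‖ / ((n:ℝ)+1) := add_le_add hb1 hb2
      _ = 3 * ‖μ‖ / ((n:ℝ)+1) := by ring
  -- K (v n) lies in a compact set
  have hvball : ∀ n, v n ∈ Metric.closedBall (0:E) 1 := by
    intro n; rw [Metric.mem_closedBall, dist_zero_right, hvnorm]
  have hcpt : IsCompact (closure (K '' Metric.closedBall (0:E) 1)) :=
    hK.isCompact_closure_image_of_bounded Metric.isBounded_closedBall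
  have hmem : ∀ n, K (v n) ∈ closure (K '' Metric.closedBall (0:E) 1) := fun n =>
    subset_closure ⟨v n, hvball n, rfl⟩
  obtain ⟨z, hz, φ, hφmono, hφlim⟩ := hcpt.tendsto_subseq hmem
  rw [Function.comp_def] at hφlim
  have h0 : Tendsto (fun n : ℕ => 3*‖μ‖/((n:ℝ)+1)) atTop (𝓝 0) := by
    have h := tendsto_one_div_add_atTop_nhds_zero_nat.const_mul (3*‖μ‖)
    simpa [div_eq_mul_inv, one_div, mul_assoc] using h
  have hdiff : Tendsto (fun n => K (v n) - μ • v n) atTop (𝓝 0) :=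
    squeeze_zero_norm hd h0
  have hdiffφ : Tendsto (fun n => K (v (φ n)) - μ • v (φ n)) atTop (𝓝 0) :=
    hdiff.comp hφmono.tendsto_atTop
  have hμv : Tendsto (fun n => μ • v (φ n)) atTop (𝓝 z) := by
    have heq : (fun n => μ • v (φ n)) =
        fun n => K (v (φ n)) - (K (v (φ n)) - μ • v (φ n)) := by
      funext n; abel
    rw [heq]
    simpa using hφlim.sub hdiffφ
  have hvφ : Tendsto (fun n => v (φ n)) atTop (𝓝 (μ⁻¹ • z)) := by
    have := hμv.const_smul μ⁻¹
    simpa [inv_smul_smul₀ hμ] using this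
  refine ⟨μ, μ⁻¹ • z, hμ, ?_, ?_⟩
  · have h1 : Tendsto (fun n => ‖v (φ n)‖) atTop (𝓝 ‖μ⁻¹ • z‖) := hvφ.norm
    have h2 : Tendsto (fun n => ‖v (φ n)‖) atTop (𝓝 1) := by
      simpa [hvnorm] using (tendsto_const_nhds : Tendsto (fun _ : ℕ => (1:ℝ)) atTop _)
    have hne := tendsto_nhds_unique h1 h2
    intro h0'
    rw [h0'] at hne
    simp at hne
  · have hKlim : Tendsto (fun n => K (v (φ n))) atTop (𝓝 (K (μ⁻¹ • z))) :=
      (K.continuous.tendsto _).comp hvφ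
    have hKz : K (μ⁻¹ • z) = z := tendsto_nhds_unique hKlim hφlim
    rw [hKz, smul_inv_smul₀ hμ]

lemma rad_ne_zero (K : E →L[ℂ] E) (m : ℝ≥0) (hm : 1 ≤ m)
    (hlow : ∀ n : ℕ, (1:ℝ≥0∞) ≤ 2 * (m:ℝ≥0∞)^n * ‖K^n‖₊) : spectralRadius ℂ K ≠ 0 := by
  intro h0
  have hg := spectrum.pow_nnnorm_pow_one_div_tendsto_nhds_spectralRadius K
  rw [h0] at hg
  have hm0 : (m:ℝ≥0∞) ≠ 0 := by
    simp only [ne_eq, ENNReal.coe_eq_zero]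
    exact fun h => by simp [h] at hm
  have hmtop : (m:ℝ≥0∞) ≠ ⊤ := ENNReal.coe_ne_top
  have hεpos : (0:ℝ≥0∞) < ((2:ℝ≥0∞)*(m:ℝ≥0∞))⁻¹ :=
    ENNReal.inv_pos.mpr (by finiteness)
  have hev : ∀ᶠ n : ℕ in atTop, (‖K^n‖₊ : ℝ≥0∞) ^ (1/(n:ℝ)) < ((2:ℝ≥0∞)*(m:ℝ≥0∞))⁻¹ :=
    hg.eventually_lt_const hεpos
  obtain ⟨n, hn2, hnb⟩ := ((eventually_ge_atTop 2).and hev).exists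
  have hn0 : (n:ℝ) ≠ 0 := by positivity
  have hx : (‖K^n‖₊ : ℝ≥0∞) < (((2:ℝ≥0∞)*(m:ℝ≥0∞))⁻¹)^(n:ℕ) := by
    have h1 : (‖K^n‖₊ : ℝ≥0∞) = ((‖K^n‖₊ : ℝ≥0∞) ^ (1/(n:ℝ))) ^ (n:ℕ) := by
      rw [← ENNReal.rpow_natCast (((‖K^n‖₊:ℝ≥0∞)) ^ (1/(n:ℝ))) n, ← ENNReal.rpow_mul,
        one_div, inv_mul_cancel₀ hn0, ENNReal.rpow_one]
    rw [h1]
    exact ENNReal.pow_lt_pow_left (by omega) hnb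
  have hfin : (2 * (m:ℝ≥0∞)^n) ≠ 0 := by
    apply mul_ne_zero two_ne_zero (pow_ne_zero n hm0)
  have hfint : (2 * (m:ℝ≥0∞)^n) ≠ ⊤ := ENNReal.mul_ne_top ENNReal.ofNat_ne_top (ENNReal.pow_ne_top hmtop)
  have hchain : (1:ℝ≥0∞) < 1 := by
    calc (1:ℝ≥0∞) ≤ 2 * (m:ℝ≥0∞)^n * ‖K^n‖₊ := hlow n
    _ < 2 * (m:ℝ≥0∞)^n * (((2:ℝ≥0∞)*(m:ℝ≥0∞))⁻¹)^(n:ℕ) := by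
        exact ENNReal.mul_lt_mul_right hfin hfint hx
    _ = 2 * (2:ℝ≥0∞)⁻¹^n * ((m:ℝ≥0∞)^n * ((m:ℝ≥0∞)^n)⁻¹) := by
        rw [ENNReal.mul_inv (Or.inl two_ne_zero) (Or.inl ENNReal.ofNat_ne_top)]
        rw [mul_pow, ENNReal.inv_pow]
        ring
    _ = 2 * (2:ℝ≥0∞)⁻¹^n := by
        rw [ENNReal.mul_inv_cancel (pow_ne_zero n hm0) (ENNReal.pow_ne_top hmtop), mul_one]
    _ ≤ 2 * (2:ℝ≥0∞)⁻¹^2 := by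
        have hp : ((2:ℝ≥0∞)⁻¹)^n ≤ ((2:ℝ≥0∞)⁻¹)^2 :=
          pow_le_pow_of_le_one zero_le (ENNReal.inv_le_one.mpr one_le_two) hn2
        exact mul_le_mul_right hp 2
    _ < 1 := by
        rw [pow_two]
        rw [show ((2:ℝ≥0∞) * (2⁻¹ * 2⁻¹)) = 2 * 2⁻¹ * 2⁻¹ by ring]
        rw [ENNReal.mul_inv_cancel two_ne_zero ENNReal.ofNat_ne_top, one_mul]
        exact ENNReal.inv_lt_one.mpr one_lt_two
  exact lt_irrefl _ hchain

lemma hilden_bound (K : E →L[ℂ] E) (hK : IsCompactOperator K) (x₀ : E) (hx₀ : K x₀ ≠ 0)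
    (horb : ∀ y : E, y ≠ 0 →
      (span ℂ (Set.range fun n : ℕ => (K^n) y)).topologicalClosure = ⊤) :
    ∃ m : ℝ≥0, 1 ≤ m ∧ ∀ n : ℕ, (1:ℝ≥0∞) ≤ 2 * (m:ℝ≥0∞)^n * ‖K^n‖₊ := by
  have hx0 : x₀ ≠ 0 := fun h => hx₀ (by rw [h, map_zero])
  have hx0n : 0 < ‖x₀‖ := norm_pos_iff.mpr hx0
  have hKx0n : 0 < ‖K x₀‖ := norm_pos_iff.mpr hx₀
  set r : ℝ := min (‖x₀‖/2) (‖K x₀‖/(2*(‖K‖+1))) with hr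
  have hrpos : 0 < r := lt_min (by positivity) (by positivity)
  have hrx : r ≤ ‖x₀‖/2 := min_le_left _ _
  have hrK : r ≤ ‖K x₀‖/(2*(‖K‖+1)) := min_le_right _ _
  set B : Set E := closedBall x₀ r with hB
  have hx₀B : x₀ ∈ B := mem_closedBall_self hrpos.le
  have hBnorm : ∀ x ∈ B, ‖x₀‖/2 ≤ ‖x‖ := by
    intro x hx
    have hd : ‖x₀ - x‖ ≤ r := by
      rw [← dist_eq_norm]
      rw [dist_comm]
      exact mem_closedBall.mp hx
    have := norm_sub_norm_le x₀ x
    linarith [hrx]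
  have hBKnorm : ∀ x ∈ B, ‖K x₀‖/2 ≤ ‖K x‖ := by
    intro x hx
    have hd : ‖x₀ - x‖ ≤ r := by
      rw [← dist_eq_norm, dist_comm]; exact mem_closedBall.mp hx
    have h1 : ‖K x₀ - K x‖ ≤ ‖K‖ * r := by
      rw [← map_sub]
      calc ‖K (x₀ - x)‖ ≤ ‖K‖ * ‖x₀ - x‖ := K.le_opNorm _
        _ ≤ ‖K‖ * r := by nlinarith [norm_nonneg K]
    have h2 : ‖K‖ * r ≤ ‖K x₀‖/2 := by
      have : ‖K‖ * r ≤ ‖K‖ * (‖K x₀‖/(2*(‖K‖+1))) := by nlinarith [norm_nonneg K]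
      have h3 : ‖K‖ * (‖K x₀‖/(2*(‖K‖+1))) ≤ ‖K x₀‖/2 := by
        rw [mul_div_assoc', div_le_div_iff₀ (by positivity) (by positivity)]
        nlinarith [norm_nonneg K, hKx0n]
      linarith
    have := norm_sub_norm_le (K x₀) (K x)
    linarith
  -- the compact set
  set C : Set E := closure (K '' B) with hC
  have hCcpt : IsCompact C := hK.isCompact_closure_image_of_bounded isBounded_closedBall
  have hCnorm : ∀ z ∈ C, ‖K x₀‖/2 ≤ ‖z‖ := by
    intro z hz
    have hcl : IsClosed {w : E | ‖K x₀‖/2 ≤ ‖w‖} :=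
      isClosed_le continuous_const continuous_norm
    have hsub : K '' B ⊆ {w : E | ‖K x₀‖/2 ≤ ‖w‖} := by
      rintro _ ⟨x, hx, rfl⟩
      exact hBKnorm x hx
    exact closure_minimal hsub hcl hz
  have hCne : ∀ z ∈ C, z ≠ 0 := by
    intro z hz h0
    have := hCnorm z hz
    rw [h0, norm_zero] at this
    linarith
  -- for each nonzero y there is a polynomial in K bringing it into B
  have hQ : ∀ y : E, y ≠ 0 → ∃ Q : E →L[ℂ] E, Commute K Q ∧ ‖Q y - x₀‖ < r := by
    intro y hy
    have hdense : x₀ ∈ closure ((span ℂ (Set.range fun n : ℕ => (K^n) y) : Submodule ℂ E) : Set E) := by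
      rw [← Submodule.topologicalClosure_coe, horb y hy]
      trivial
    rw [Metric.mem_closure_iff] at hdense
    obtain ⟨w, hw, hwd⟩ := hdense r hrpos
    rw [SetLike.mem_coe, Finsupp.mem_span_range_iff_exists_finsupp] at hw
    obtain ⟨c, hc⟩ := hw
    refine ⟨c.sum fun n a => a • K^n, ?_, ?_⟩
    · rw [Finsupp.sum]
      exact Commute.sum_right _ _ _ fun i _ => ((Commute.refl K).pow_right i).smul_right _
    · have happ : (c.sum fun n a => a • K^n) y = w := by
        rw [← hc]
        rw [Finsupp.sum, Finsupp.sum, ContinuousLinearMap.sum_apply]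
        simp [ContinuousLinearMap.smul_apply]
      rw [happ, ← dist_eq_norm, dist_comm]
      exact hwd
  -- choose for each z in C an operator
  have hQC : ∀ z : C, ∃ Q : E →L[ℂ] E, Commute K Q ∧ ‖Q z - x₀‖ < r := fun z =>
    hQ z (hCne z z.2)
  choose Q hQcomm hQclose using hQC
  have hcover : C ⊆ ⋃ z : C, {w : E | ‖Q z w - x₀‖ < r} := fun z hz =>
    Set.mem_iUnion.mpr ⟨⟨z, hz⟩, hQclose ⟨z, hz⟩⟩
  have hopen : ∀ z : C, IsOpen {w : E | ‖Q z w - x₀‖ < r} := fun z =>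
    isOpen_lt (((Q z).continuous.sub continuous_const).norm) continuous_const
  obtain ⟨t, ht⟩ := hCcpt.elim_finite_subcover (fun z : C => {w : E | ‖Q z w - x₀‖ < r})
    hopen hcover
  set M : ℝ := 1 + ∑ i ∈ t, ‖Q i‖ with hM
  have hsum : (0:ℝ) ≤ ∑ i ∈ t, ‖Q i‖ := Finset.sum_nonneg fun i _ => norm_nonneg _
  have hM1 : 1 ≤ M := by rw [hM]; linarith
  have hM0 : 0 < M := lt_of_lt_of_le one_pos hM1
  have hMQ : ∀ i ∈ t, ‖Q i‖ ≤ M := by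
    intro i hi
    have := Finset.single_le_sum (f := fun i => ‖Q i‖) (fun j _ => norm_nonneg _) hi
    rw [hM]; linarith
  have hstep : ∀ y ∈ B, ∃ Q' : E →L[ℂ] E, Commute K Q' ∧ ‖Q'‖ ≤ M ∧ Q' (K y) ∈ B := by
    intro y hy
    have hKy : K y ∈ C := subset_closure ⟨y, hy, rfl⟩
    obtain ⟨i, hit, hiU⟩ := Set.mem_iUnion₂.mp (ht hKy)
    refine ⟨Q i, hQcomm i, hMQ i hit, ?_⟩
    rw [hB, mem_closedBall, dist_comm, dist_eq_norm, norm_sub_rev]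
    exact hiU.le
  have hmain : ∀ n : ℕ, ∃ P : E →L[ℂ] E, Commute K P ∧ ‖P‖ ≤ M^n ∧ P ((K^n) x₀) ∈ B := by
    intro n
    induction n with
    | zero => exact ⟨1, Commute.one_right K, by simp, by simpa using hx₀B⟩
    | succ n ih =>
      obtain ⟨P, hPc, hPn, hPB⟩ := ih
      obtain ⟨Q', hQ'c, hQ'n, hQ'B⟩ := hstep _ hPB
      refine ⟨Q' * P, hQ'c.mul_right hPc, ?_, ?_⟩
      · calc ‖Q' * P‖ ≤ ‖Q'‖ * ‖P‖ := norm_mul_le _ _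
          _ ≤ M * M^n := mul_le_mul hQ'n hPn (norm_nonneg _) hM0.le
          _ = M^(n+1) := (pow_succ' M n).symm
      · have hcomm : K (P ((K^n) x₀)) = P ((K^(n+1)) x₀) := by
          have h1 := congrArg (fun f : E →L[ℂ] E => f ((K^n) x₀)) hPc.eq
          simp only [ContinuousLinearMap.mul_apply] at h1
          rw [h1, show (K^(n+1)) = K * K^n from pow_succ' K n, ContinuousLinearMap.mul_apply]
        rw [ContinuousLinearMap.mul_apply, ← hcomm]
        exact hQ'B
  refine ⟨M.toNNReal, ?_, ?_⟩
  · rw [← Real.toNNReal_one]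
    exact Real.toNNReal_le_toNNReal hM1
  · intro n
    obtain ⟨P, hPc, hPn, hPB⟩ := hmain n
    have h1 : ‖x₀‖/2 ≤ ‖P ((K^n) x₀)‖ := hBnorm _ hPB
    have h2 : ‖P ((K^n) x₀)‖ ≤ M^n * (‖K^n‖ * ‖x₀‖) := by
      calc ‖P ((K^n) x₀)‖ ≤ ‖P‖ * ‖(K^n) x₀‖ := P.le_opNorm _
        _ ≤ M^n * ‖(K^n) x₀‖ := by
            apply mul_le_mul_of_nonneg_right hPn (norm_nonneg _)
        _ ≤ M^n * (‖K^n‖ * ‖x₀‖) := by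
            apply mul_le_mul_of_nonneg_left ((K^n).le_opNorm _) (by positivity)
    have hreal : (1:ℝ) ≤ 2 * M^n * ‖K^n‖ := by
      have hMn : (0:ℝ) < M^n := by positivity
      nlinarith [norm_nonneg (K^n)]
    rw [show ((2:ℝ≥0∞) * ((M.toNNReal : ℝ≥0∞))^n * ‖K^n‖₊)
        = (((2 * M.toNNReal^n * ‖K^n‖₊ : ℝ≥0)) : ℝ≥0∞) by push_cast; ring]
    rw [ENNReal.one_le_coe_iff]
    rw [← NNReal.coe_le_coe]
    push_cast
    rw [Real.coe_toNNReal M hM0.le]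
    exact hreal

end Aux

section Aux2
variable {E : Type*} [NormedAddCommGroup E] [NormedSpace ℂ E] [CompleteSpace E]

/-- Every nonzero compact operator on an infinite-dimensional complex Banach space has a
nontrivial closed invariant subspace. -/
lemma key (hinf : ¬ FiniteDimensional ℂ E) (K : E →L[ℂ] E) (hK : IsCompactOperator K)
    (hK0 : K ≠ 0) :
    ∃ S : Submodule ℂ E, IsClosed (S : Set E) ∧ S ≠ ⊥ ∧ S ≠ ⊤ ∧ ∀ x ∈ S, K x ∈ S := by
  haveI : Nontrivial E := by
    by_contra h
    haveI : Subsingleton E := not_nontrivial_iff_subsingleton.mp h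
    exact hinf inferInstance
  by_cases heig : ∃ (μ : ℂ) (v : E), v ≠ 0 ∧ K v = μ • v
  · -- eigenspace case
    obtain ⟨μ, v, hv0, hKv⟩ := heig
    set f : E →L[ℂ] E := K - μ • ContinuousLinearMap.id ℂ E with hf
    have hfx : ∀ x : E, f x = K x - μ • x := by
      intro x; rw [hf]; simp
    refine ⟨LinearMap.ker (f : E →ₗ[ℂ] E), ?_, ?_, ?_, ?_⟩
    · exact ContinuousLinearMap.isClosed_ker f
    · rw [Submodule.ne_bot_iff]
      refine ⟨v, ?_, hv0⟩
      rw [LinearMap.mem_ker]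
      show f v = 0
      rw [hfx, hKv, sub_self]
    · intro htop
      have hall : ∀ x : E, K x = μ • x := by
        intro x
        have hx : x ∈ LinearMap.ker (f : E →ₗ[ℂ] E) := htop ▸ Submodule.mem_top
        have : f x = 0 := hx
        rw [hfx] at this
        exact sub_eq_zero.mp this
      by_cases hμ : μ = 0
      · apply hK0
        ext x
        rw [hall x, hμ, zero_smul]; rfl
      · -- identity is compact, contradiction with infinite dimension
        have hid : IsCompactOperator (fun x : E => x) := by
          have h1 : IsCompactOperator (μ⁻¹ • (K : E → E)) := hK.smul μ⁻¹
          have h2 : (μ⁻¹ • (K : E → E)) = fun x : E => x := by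
            funext x
            simp only [Pi.smul_apply, hall x, inv_smul_smul₀ hμ]
          rwa [h2] at h1
        apply hinf
        have hid' : IsCompactOperator (⇑(LinearMap.id : E →ₗ[ℂ] E)) := by
          rw [LinearMap.id_coe]
          exact hid
        have hcpt : IsCompact (closure ((LinearMap.id : E →ₗ[ℂ] E) '' closedBall 0 1)) :=
          hid'.isCompact_closure_image_of_bounded isBounded_closedBall
        rw [LinearMap.id_coe, Set.image_id, IsClosed.closure_eq Metric.isClosed_closedBall] at hcpt
        exact FiniteDimensional.of_isCompact_closedBall₀ ℂ one_pos hcpt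
    · intro x hx
      have hx' : K x = μ • x := by
        have : f x = 0 := hx
        rw [hfx] at this
        exact sub_eq_zero.mp this
      show f (K x) = 0
      rw [hfx, hx', map_smul, hx', smul_comm, sub_self]
  · -- no eigenvector
    by_cases horb : ∀ y : E, y ≠ 0 →
        (span ℂ (Set.range fun n : ℕ => (K^n) y)).topologicalClosure = ⊤
    · -- Hilden: contradiction
      exfalso
      obtain ⟨x₀, hx₀⟩ : ∃ x₀ : E, K x₀ ≠ 0 := by
        by_contra hc
        push_neg at hc
        exact hK0 (by ext x; exact hc x)
      obtain ⟨m, hm1, hmlow⟩ := hilden_bound K hK x₀ hx₀ horb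
      obtain ⟨μ, v, hμ0, hv0, hKv⟩ :=
        eigen_of_spectralRadius_ne_zero K hK (rad_ne_zero K m hm1 hmlow)
      exact heig ⟨μ, v, hv0, hKv⟩
    · push_neg at horb
      obtain ⟨y, hy0, hyne⟩ := horb
      set S := (span ℂ (Set.range fun n : ℕ => (K^n) y)).topologicalClosure with hS
      refine ⟨S, Submodule.isClosed_topologicalClosure _, ?_, hyne, ?_⟩
      · rw [Submodule.ne_bot_iff]
        refine ⟨y, ?_, hy0⟩
        apply Submodule.le_topologicalClosure
        apply Submodule.subset_span
        exact ⟨0, by simp⟩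
      · intro x hx
        have hmaps : Set.MapsTo K (span ℂ (Set.range fun n : ℕ => (K^n) y) : Set E)
            (span ℂ (Set.range fun n : ℕ => (K^n) y) : Set E) := by
          intro z hz
          rw [SetLike.mem_coe] at hz ⊢
          induction hz using Submodule.span_induction with
          | mem w hw =>
            obtain ⟨n, rfl⟩ := hw
            apply Submodule.subset_span
            exact ⟨n+1, by show (K^(n+1)) y = K ((K^n) y)
                           rw [show K^(n+1) = K * K^n from pow_succ' K n, ContinuousLinearMap.mul_apply]⟩
          | zero => rw [map_zero]; exact Submodule.zero_mem _
          | add a b _ _ ha hb => rw [map_add]; exact Submodule.add_mem _ ha hb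
          | smul c a _ ha => rw [map_smul]; exact Submodule.smul_mem _ c ha
        have hx' : x ∈ closure (span ℂ (Set.range fun n : ℕ => (K^n) y) : Set E) := hx
        have := map_mem_closure K.continuous hx' hmaps
        exact this

end Aux2

/-- Every scalar-plus-compact operator on a separable infinite-dimensional complex
Hilbert space has a nontrivial closed invariant subspace. -/
theorem stmt_17 {H : Type*} [NormedAddCommGroup H] [InnerProductSpace ℂ H] [CompleteSpace H]
    [TopologicalSpace.SeparableSpace H] (hinf : ¬ FiniteDimensional ℂ H)
    (lam : ℂ) (K : H →L[ℂ] H) (hK : IsCompactOperator K)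
    (T : H →L[ℂ] H) (hT : T = lam • ContinuousLinearMap.id ℂ H + K) :
    ∃ E : Submodule ℂ H, IsClosed (E : Set H) ∧ E ≠ ⊥ ∧ E ≠ ⊤ ∧ ∀ x ∈ E, T x ∈ E := by
  haveI : Nontrivial H := by
    by_contra h
    haveI : Subsingleton H := not_nontrivial_iff_subsingleton.mp h
    exact hinf inferInstance
  by_cases hK0 : K = 0
  · obtain ⟨x, hx⟩ := exists_ne (0 : H)
    refine ⟨span ℂ {x}, ?_, ?_, ?_, ?_⟩
    · exact Submodule.closed_of_finiteDimensional _
    · rw [Ne, Submodule.span_singleton_eq_bot]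
      exact hx
    · intro htop
      apply hinf
      have h1 : FiniteDimensional ℂ (⊤ : Submodule ℂ H) := htop ▸ inferInstance
      exact (Submodule.topEquiv (R := ℂ) (M := H)).finiteDimensional
    · intro y hy
      rw [hT, hK0]
      simp only [add_apply, ContinuousLinearMap.smul_apply, id_apply, zero_apply, add_zero]
      exact Submodule.smul_mem _ _ hy
  · obtain ⟨S, hcl, hbot, htop, hinv⟩ := key hinf K hK hK0
    refine ⟨S, hcl, hbot, htop, ?_⟩
    intro y hy
    rw [hT]
    simp only [add_apply, ContinuousLinearMap.smul_apply, id_apply]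
    exact Submodule.add_mem _ (Submodule.smul_mem _ _ hy) (hinv y hy)
end
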